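/- For every ε ∈ (0,1) there exists a constant c > 0, depending only on ε, such that the following holds. Let θ ∈ (0, (1−ε)π), let α ∈ ℝ with 1 − (1−ε)π/θ ≤ α ≤ (1−ε)π/θ − 1, let t ∈ ℝ, let k ≥ 1 be an integer, and set λ̃ = α + i t. Then |(λ̃ − 2α + 1)² − (kπ/θ)²|² ≥ c·(kπ/θ)⁴, |(λ̃ − 2α + 1)² − (kπ/θ)²|² ≥ c·|λ̃ − 1|⁴, and |(λ̃ − 2α + 1)² − (kπ/θ)²|² ≥ c·|λ̃|⁴. -/

import Mathlib

open Real

lemma helm_aux1 (ε a b t : ℝ) (hε0 : 0 < ε) (hε1 : ε < 1)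
    (ha : a^2 ≤ (1-ε)^2 * b^2) :
    (ε*(2-ε))^2/2 * b^4 ≤ (a^2 - t^2 - b^2)^2 + 4*a^2*t^2 := by
  have h1 : ε*(2-ε)*b^2 ≤ b^2 - a^2 := by nlinarith
  have h2 : 0 < ε*(2-ε) := by nlinarith
  have hnn : 0 ≤ ε*(2-ε)*b^2 := mul_nonneg h2.le (sq_nonneg b)
  have hq : (ε*(2-ε))^2 * b^4 ≤ (b^2-a^2)^2 := by
    nlinarith [pow_le_pow_left₀ hnn h1 2]
  nlinarith [hq, sq_nonneg (t^2), mul_nonneg (sq_nonneg a) (sq_nonneg t),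
    mul_nonneg (sq_nonneg b) (sq_nonneg t)]

lemma helm_aux2 (ε a x b t : ℝ) (hε0 : 0 < ε) (hε1 : ε < 1)
    (ha : a^2 ≤ (1-ε)^2 * b^2) (hx : x^2 ≤ (1-ε)^2 * b^2) :
    (ε*(2-ε))^2/2 * (x^2 + t^2)^2 ≤ (a^2 - t^2 - b^2)^2 + 4*a^2*t^2 := by
  have h1 : ε*(2-ε)*b^2 ≤ b^2 - a^2 := by nlinarith
  have h2 : 0 < ε*(2-ε) := by nlinarith
  have hc1 : (ε*(2-ε))^2 ≤ 1 := by nlinarith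
  have hnn : 0 ≤ ε*(2-ε)*b^2 := mul_nonneg h2.le (sq_nonneg b)
  have hq : (ε*(2-ε))^2 * b^4 ≤ (b^2-a^2)^2 := by
    nlinarith [pow_le_pow_left₀ hnn h1 2]
  have hx4 : x^4 ≤ b^4 := by nlinarith [sq_nonneg x, sq_nonneg b]
  have hq2x : (ε*(2-ε))^2 * x^4 ≤ (b^2-a^2)^2 := by nlinarith [sq_nonneg (ε*(2-ε))]
  nlinarith [hq2x, mul_nonneg (sq_nonneg (ε*(2-ε))) (sq_nonneg (x^2-t^2)),
    mul_nonneg (sub_nonneg.mpr hc1) (sq_nonneg (t^2)), sq_nonneg (t^2),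
    mul_nonneg (sq_nonneg a) (sq_nonneg t), mul_nonneg (sq_nonneg b) (sq_nonneg t)]

/-- Lower bounds on the denominators `(λ̃ − 2α + 1)² − (kπ/θ)²` in the Fourier-series
representation of the Helmholtz potential on a wedge, for `α ∈ I_ε` and `λ̃ = α + it`. -/
theorem helmholtz_denominator_lower_bounds (ε : ℝ) (hε : ε ∈ Set.Ioo (0:ℝ) 1) :
    ∃ c : ℝ, 0 < c ∧ ∀ θ : ℝ, θ ∈ Set.Ioo (0:ℝ) ((1 - ε) * π) →
      ∀ α : ℝ, 1 - (1 - ε) * π / θ ≤ α → α ≤ (1 - ε) * π / θ - 1 →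
      ∀ t : ℝ, ∀ k : ℕ, 1 ≤ k →
      c * ((k : ℝ) * π / θ)^4 ≤
        (norm ((((α : ℂ) + t * Complex.I) - 2 * (α : ℂ) + 1)^2
          - (((k : ℝ) * π / θ : ℝ) : ℂ)^2))^2 ∧
      c * (norm (((α : ℂ) + t * Complex.I) - 1))^4 ≤
        (norm ((((α : ℂ) + t * Complex.I) - 2 * (α : ℂ) + 1)^2
          - (((k : ℝ) * π / θ : ℝ) : ℂ)^2))^2 ∧
      c * (norm ((α : ℂ) + t * Complex.I))^4 ≤
        (norm ((((α : ℂ) + t * Complex.I) - 2 * (α : ℂ) + 1)^2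
          - (((k : ℝ) * π / θ : ℝ) : ℂ)^2))^2 := by
  obtain ⟨hε0, hε1⟩ := hε
  have hc0 : 0 < (ε*(2-ε))^2/2 := by
    have h : 0 < ε*(2-ε) := by nlinarith
    positivity
  refine ⟨(ε*(2-ε))^2/2, hc0, ?_⟩
  intro θ hθ α hα1 hα2 t k hk
  obtain ⟨hθ0, hθπ⟩ := hθ
  set b : ℝ := (k : ℝ) * π / θ with hbdef
  have hπ0 : (0:ℝ) < π := Real.pi_pos
  have hk1 : (1:ℝ) ≤ (k:ℝ) := by exact_mod_cast hk
  have hbge : π / θ ≤ b := by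
    rw [hbdef, div_le_div_iff_of_pos_right hθ0]
    nlinarith
  have hI : 1 < (1-ε) * π / θ := by
    rw [lt_div_iff₀ hθ0]; linarith
  have hIb : (1-ε) * π / θ ≤ (1-ε) * b := by
    have h : (1-ε) * π / θ = (1-ε) * (π/θ) := by ring
    rw [h]
    exact mul_le_mul_of_nonneg_left hbge (by linarith)
  have hb1 : 1 < (1-ε) * b := lt_of_lt_of_le hI hIb
  have ha2 : (1-α)^2 ≤ (1-ε)^2 * b^2 := by nlinarith
  have hα2' : α^2 ≤ (1-ε)^2 * b^2 := by nlinarith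
  have habs : (norm ((((α : ℂ) + t * Complex.I) - 2 * (α : ℂ) + 1)^2
        - ((b : ℝ) : ℂ)^2))^2
      = ((1-α)^2 - t^2 - b^2)^2 + 4*(1-α)^2*t^2 := by
    rw [Complex.sq_norm, Complex.normSq_apply]
    simp only [Complex.add_re, Complex.add_im, Complex.sub_re, Complex.sub_im,
      Complex.mul_re, Complex.mul_im, Complex.ofReal_re, Complex.ofReal_im,
      Complex.I_re, Complex.I_im, Complex.one_re, Complex.one_im, pow_two,
      Complex.re_ofNat, Complex.im_ofNat]
    ring
  have habs1 : (norm (((α : ℂ) + t * Complex.I) - 1))^2 = (α-1)^2 + t^2 := by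
    rw [Complex.sq_norm, Complex.normSq_apply]
    simp only [Complex.add_re, Complex.add_im, Complex.sub_re, Complex.sub_im,
      Complex.mul_re, Complex.mul_im, Complex.ofReal_re, Complex.ofReal_im,
      Complex.I_re, Complex.I_im, Complex.one_re, Complex.one_im, pow_two]
    ring
  have habs2 : (norm ((α : ℂ) + t * Complex.I))^2 = α^2 + t^2 := by
    rw [Complex.sq_norm, Complex.normSq_apply]
    simp only [Complex.add_re, Complex.add_im, Complex.mul_re, Complex.mul_im,
      Complex.ofReal_re, Complex.ofReal_im, Complex.I_re, Complex.I_im, pow_two]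
    ring
  have h4 : ∀ z : ℂ, (norm z)^4 = ((norm z)^2)^2 := by
    intro z; ring
  rw [habs]
  refine ⟨helm_aux1 ε (1-α) b t hε0 hε1 ha2, ?_, ?_⟩
  · rw [h4, habs1]
    have h : (α-1)^2 = (1-α)^2 := by ring
    rw [h]
    exact helm_aux2 ε (1-α) (1-α) b t hε0 hε1 ha2 ha2
  · rw [h4, habs2]
    exact helm_aux2 ε (1-α) α b t hε0 hε1 ha2 hα2'
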